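/- In the ring of formal power series in x with coefficients in ℤ[q], the series S(x) = Σ_{m=0}^{∞} x^m (x;q)_m satisfies the functional equation S(x) = 1 + x − qx³ · S(qx), where S(qx) denotes the power series obtained from S(x) by rescaling x to qx. -/

import Mathlib

/-- The parameter `q`, viewed as a constant of the power series ring `ℤ[q][[x]]`. -/
noncomputable def qc : PowerSeries (Polynomial ℤ) :=
  PowerSeries.C Polynomial.X

/-- The q-Pochhammer symbol `(x;q)_m = (1-x)(1-qx)⋯(1-q^{m-1}x)` in `ℤ[q][[x]]`. -/
noncomputable def qPoch (m : ℕ) : PowerSeries (Polynomial ℤ) :=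
  ∏ i ∈ Finset.range m, (1 - qc ^ i * PowerSeries.X)

/-- The sum `∑_{m=0}^∞ f m` of a family of power series whose `m`-th member is
divisible by `x^m`. -/
noncomputable def seriesSum (f : ℕ → PowerSeries (Polynomial ℤ)) :
    PowerSeries (Polynomial ℤ) :=
  PowerSeries.mk fun d => PowerSeries.coeff d (∑ m ∈ Finset.range (d + 1), f m)

/-- `S(x) = ∑_{m=0}^∞ x^m (x;q)_m ∈ ℤ[q][[x]]`. -/
noncomputable def Sseries : PowerSeries (Polynomial ℤ) :=
  seriesSum fun m => PowerSeries.X ^ m * qPoch m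

open PowerSeries Finset

/-- The shifted Pochhammer symbol `(qx;q)_m`. -/
noncomputable def Rq (m : ℕ) : PowerSeries (Polynomial ℤ) :=
  ∏ i ∈ Finset.range m, (1 - qc ^ (i + 1) * PowerSeries.X)

lemma rescale_C' (a r : Polynomial ℤ) :
    rescale a (PowerSeries.C r) = PowerSeries.C r := by
  apply PowerSeries.ext; intro n
  rw [coeff_rescale]
  rcases eq_or_ne n 0 with rfl | h
  · simp
  · simp [PowerSeries.coeff_C, h]

lemma rescale_term (m : ℕ) :
    rescale Polynomial.X (PowerSeries.X ^ m * qPoch m)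
      = qc ^ m * PowerSeries.X ^ m * Rq m := by
  rw [map_mul, map_pow, rescale_X, qPoch, map_prod]
  have h : ∀ i ∈ range m, rescale Polynomial.X (1 - qc ^ i * PowerSeries.X)
      = 1 - qc ^ (i + 1) * PowerSeries.X := by
    intro i _
    simp only [qc]
    rw [map_sub, map_one, map_mul, map_pow, rescale_C' Polynomial.X, rescale_X]
    rw [pow_succ]
    ring
  rw [Finset.prod_congr rfl h]
  show (PowerSeries.C Polynomial.X * PowerSeries.X) ^ m * Rq m = _
  rw [mul_pow]
  rfl

lemma qPoch_succ (m : ℕ) : qPoch (m + 1) = (1 - PowerSeries.X) * Rq m := by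
  rw [qPoch, Finset.prod_range_succ']
  simp only [pow_zero, one_mul]
  rw [mul_comm]
  rfl

lemma Rq_succ (m : ℕ) : Rq (m + 1) = Rq m * (1 - qc ^ (m + 1) * PowerSeries.X) :=
  Finset.prod_range_succ _ _

/-- The finite telescoped identity. -/
lemma key (N : ℕ) :
    ∑ m ∈ range (N + 1), PowerSeries.X ^ m * qPoch m
      = 1 + PowerSeries.X - PowerSeries.X ^ (N + 1) * Rq N
        - qc * PowerSeries.X ^ 3 *
            rescale Polynomial.X (∑ m ∈ range N, PowerSeries.X ^ m * qPoch m) := by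
  induction N with
  | zero => simp [qPoch, Rq]
  | succ N ih =>
    rw [Finset.sum_range_succ]
    nth_rewrite 2 [Finset.sum_range_succ]
    rw [ih, map_add, rescale_term, qPoch_succ, Rq_succ]
    ring

lemma coeff_term_zero {d m : ℕ} (h : d < m) :
    PowerSeries.coeff d (PowerSeries.X ^ m * qPoch m) = 0 :=
  (PowerSeries.X_pow_dvd_iff.mp (dvd_mul_right _ _)) d h

lemma coeff_S (d N : ℕ) (h : d ≤ N) :
    PowerSeries.coeff d Sseries
      = PowerSeries.coeff d
          (∑ m ∈ range (N + 1), PowerSeries.X ^ m * qPoch m) := by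
  rw [Sseries, seriesSum, PowerSeries.coeff_mk, map_sum, map_sum]
  apply Finset.sum_subset
  · exact Finset.range_subset_range.mpr (by omega)
  · intro m hm hnot
    simp only [Finset.mem_range] at hm hnot
    exact coeff_term_zero (by omega)

lemma S_sub_partial (N : ℕ) :
    (PowerSeries.X : PowerSeries (Polynomial ℤ)) ^ N ∣
      Sseries - ∑ m ∈ range N, PowerSeries.X ^ m * qPoch m := by
  rw [PowerSeries.X_pow_dvd_iff]
  intro d hd
  rw [map_sub, sub_eq_zero]
  obtain ⟨M, rfl⟩ : ∃ M, N = M + 1 := ⟨N - 1, by omega⟩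
  exact coeff_S d M (by omega)

lemma X_pow_dvd_rescale {a : Polynomial ℤ} {g : PowerSeries (Polynomial ℤ)} {n : ℕ}
    (h : (PowerSeries.X : PowerSeries (Polynomial ℤ)) ^ n ∣ g) :
    (PowerSeries.X : PowerSeries (Polynomial ℤ)) ^ n ∣ rescale a g := by
  rw [PowerSeries.X_pow_dvd_iff] at h ⊢
  intro m hm
  rw [coeff_rescale, h m hm, mul_zero]

/-- The functional equation `S(x) = 1 + x - qx³ S(qx)` in `ℤ[q][[x]]`, where `S(qx)` is
obtained from `S(x)` by rescaling `x` to `qx`. -/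
theorem Sseries_functional_equation :
    Sseries = 1 + PowerSeries.X
      - qc * PowerSeries.X ^ 3 * PowerSeries.rescale Polynomial.X Sseries := by
  apply PowerSeries.ext; intro d
  rw [coeff_S d d le_rfl, key d]
  have e1 : PowerSeries.coeff d
      (PowerSeries.X ^ (d + 1) * Rq d) = 0 :=
    (PowerSeries.X_pow_dvd_iff.mp (dvd_mul_right _ _)) d (by omega)
  have e2 : PowerSeries.coeff d
        (qc * PowerSeries.X ^ 3 * rescale Polynomial.X Sseries)
      = PowerSeries.coeff d
        (qc * PowerSeries.X ^ 3 *
          rescale Polynomial.X (∑ m ∈ range d, PowerSeries.X ^ m * qPoch m)) := by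
    rw [← sub_eq_zero, ← map_sub, ← mul_sub, ← map_sub]
    have h1 : (PowerSeries.X : PowerSeries (Polynomial ℤ)) ^ d ∣
        rescale Polynomial.X (Sseries - ∑ m ∈ range d, PowerSeries.X ^ m * qPoch m) :=
      X_pow_dvd_rescale (S_sub_partial d)
    obtain ⟨c, hc⟩ := h1
    have h2 : (PowerSeries.X : PowerSeries (Polynomial ℤ)) ^ (d + 1) ∣
        qc * PowerSeries.X ^ 3 *
          rescale Polynomial.X (Sseries - ∑ m ∈ range d, PowerSeries.X ^ m * qPoch m) :=
      ⟨qc * PowerSeries.X ^ 2 * c, by rw [hc]; ring⟩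
    exact (PowerSeries.X_pow_dvd_iff.mp h2) d (by omega)
  simp only [map_sub, e1, sub_zero, e2]
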